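/- Let G be a digraph and x a vertex that lies on no directed cycle of G. Let R = R_G(x) be the set of vertices other than x reachable from x, and R̄ = V(G) \ (R ∪ {x}). Then a set F ⊆ V(G) is a feedback vertex set of G if and only if F ∩ R is a feedback vertex set of G[R] and F ∩ R̄ is a feedback vertex set of G[R̄]. -/

import Mathlib

variable {V : Type*}

def IsDicycle (A : V → V → Prop) : List V → Prop
  | [] => False
  | v :: l => (v :: l).Nodup ∧ List.Chain A v (l ++ [v])

def IsTournament (A : V → V → Prop) : Prop :=
  (∀ v, ¬ A v v) ∧ ∀ u v : V, u ≠ v → (A u v ↔ ¬ A v u)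

def IndepNumLE (A : V → V → Prop) (α : ℕ) : Prop :=
  ∀ I : Finset V, (∀ u ∈ I, ∀ v ∈ I, u ≠ v → ¬ A u v) → I.card ≤ α

noncomputable def outDeg (A : V → V → Prop) (v : V) : ℕ := {u | A v u}.ncard

noncomputable def inDeg (A : V → V → Prop) (v : V) : ℕ := {u | A u v}.ncard

def restrictRel (A : V → V → Prop) (S : Set V) : V → V → Prop :=
  fun u v => u ∈ S ∧ v ∈ S ∧ A u v

def cycleArcs : List V → List (V × V)
  | [] => []
  | v :: l => List.zip (v :: l) (l ++ [v])

def IsInducedDicycle (A : V → V → Prop) (l : List V) : Prop :=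
  IsDicycle A l ∧ ∀ u ∈ l, ∀ v ∈ l, A u v → (u, v) ∈ cycleArcs l

def IsFVS (A : V → V → Prop) (F : Set V) : Prop :=
  ∀ l, IsDicycle A l → ∃ v ∈ l, v ∈ F

def reachSet (A : V → V → Prop) (x : V) : Set V :=
  {y | y ≠ x ∧ Relation.TransGen A x y}

def HitsCyclesThrough (A : V → V → Prop) (S F : Set V) : Prop :=
  ∀ l, IsDicycle A l → (∃ v ∈ l, v ∈ S) → ∃ v ∈ l, v ∈ F

private lemma chain_src_mem {A : V → V → Prop} {S : Set V} :
    ∀ (l : List V) (a b : V), List.Chain (restrictRel A S) a (l ++ [b]) →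
      ∀ z ∈ a :: l, z ∈ S := by
  intro l
  induction l with
  | nil =>
    intro a b h z hz
    simp only [List.nil_append, List.chain_cons] at h
    simp only [List.Chain, List.isChain_cons_cons] at h
    simp only [List.mem_singleton] at hz
    subst hz; exact h.1.1
  | cons c l ih =>
    intro a b h z hz
    simp only [List.cons_append, List.chain_cons] at h
    simp only [List.Chain, List.isChain_cons_cons] at h
    rcases List.mem_cons.mp hz with rfl | hz
    · exact h.1.1
    · exact ih c b h.2 z hz

private lemma reach_of_chain {A : V → V → Prop} :
    ∀ (l : List V) (a b : V), List.Chain A a l → b ∈ l →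
      Relation.ReflTransGen A a b := by
  intro l
  induction l with
  | nil => intro a b _ hb; simp at hb
  | cons c l ih =>
    intro a b h hb
    simp only [List.Chain, List.isChain_cons_cons] at h
    rcases List.mem_cons.mp hb with rfl | hb
    · exact Relation.ReflTransGen.single h.1
    · exact Relation.ReflTransGen.head h.1 (ih c b h.2 hb)

private lemma reach_to_last {A : V → V → Prop} :
    ∀ (l : List V) (a b : V), List.Chain A a (l ++ [b]) →
      ∀ z ∈ a :: l, Relation.ReflTransGen A z b := by
  intro l
  induction l with
  | nil =>
    intro a b h z hz
    simp only [List.nil_append, List.chain_cons] at h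
    simp only [List.Chain, List.isChain_cons_cons] at h
    simp only [List.mem_singleton] at hz
    subst hz; exact Relation.ReflTransGen.single h.1
  | cons c l ih =>
    intro a b h z hz
    simp only [List.cons_append, List.chain_cons] at h
    simp only [List.Chain, List.isChain_cons_cons] at h
    rcases List.mem_cons.mp hz with rfl | hz
    · exact Relation.ReflTransGen.head h.1 (ih c b h.2 c (List.mem_cons_self))
    · exact ih c b h.2 z hz

private lemma chain_restrict {A : V → V → Prop} {S : Set V} :
    ∀ (l : List V) (a : V), List.Chain A a l → a ∈ S → (∀ z ∈ l, z ∈ S) →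
      List.Chain (restrictRel A S) a l := by
  intro l
  induction l with
  | nil => intro a _ _ _; exact List.Chain.nil
  | cons c l ih =>
    intro a h ha hS
    simp only [List.Chain, List.isChain_cons_cons] at h ⊢
    refine ⟨⟨ha, hS c (List.mem_cons_self), h.1⟩, ih c h.2 (hS c (List.mem_cons_self))
      fun z hz => hS z (List.mem_cons_of_mem c hz)⟩

private lemma dicycle_reach {A : V → V → Prop} {l : List V} (h : IsDicycle A l)
    {y z : V} (hy : y ∈ l) (hz : z ∈ l) : Relation.ReflTransGen A y z := by
  cases l with
  | nil => exact absurd h id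
  | cons v l =>
    obtain ⟨-, hc⟩ := h
    have h1 : Relation.ReflTransGen A y v := reach_to_last l v v hc y hy
    have h2 : Relation.ReflTransGen A v z := by
      rcases List.mem_cons.mp hz with rfl | hz
      · exact Relation.ReflTransGen.refl
      · exact reach_of_chain (l ++ [v]) v z hc (List.mem_append_left _ hz)
    exact h1.trans h2

/-- If x lies on no directed cycle, then F is an FVS of G iff F ∩ R is an FVS of
G[R] and F ∩ R̄ is an FVS of G[R̄]. -/
theorem stmt10 (A : V → V → Prop) (x : V)
    (hx : ∀ l : List V, IsDicycle A l → x ∉ l) (F : Set V) :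
    IsFVS A F ↔
      IsFVS (restrictRel A (reachSet A x)) (F ∩ reachSet A x) ∧
      IsFVS (restrictRel A (reachSet A x ∪ {x})ᶜ) (F ∩ (reachSet A x ∪ {x})ᶜ) := by
  constructor
  · intro h
    constructor <;>
    · intro l hl
      have hl' : IsDicycle A l := by
        cases l with
        | nil => exact absurd hl id
        | cons v t => exact ⟨hl.1, List.IsChain.imp (fun _ _ hab => hab.2.2) hl.2⟩
      obtain ⟨v, hv, hvF⟩ := h l hl'
      refine ⟨v, hv, hvF, ?_⟩
      cases l with
      | nil => exact absurd hl' id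
      | cons w t => exact chain_src_mem t w w hl.2 v hv
  · rintro ⟨h1, h2⟩ l hl
    have hxl : x ∉ l := hx l hl
    by_cases hR : ∃ y ∈ l, y ∈ reachSet A x
    · -- all vertices of l lie in reachSet A x
      obtain ⟨y, hy, hyne, hyR⟩ := hR
      have hall : ∀ z ∈ l, z ∈ reachSet A x := by
        intro z hz
        refine ⟨fun hzx => hxl (hzx ▸ hz), ?_⟩
        exact Relation.TransGen.trans_left hyR (dicycle_reach hl hy hz)
      cases l with
      | nil => exact absurd hl id
      | cons v t =>
        have hchain : List.Chain (restrictRel A (reachSet A x)) v (t ++ [v]) :=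
          chain_restrict (t ++ [v]) v hl.2 (hall v (List.mem_cons_self)) (by
            intro z hz
            rcases List.mem_append.mp hz with hz | hz
            · exact hall z (List.mem_cons_of_mem v hz)
            · simp only [List.mem_singleton] at hz
              rw [hz]; exact hall v (List.mem_cons_self))
        obtain ⟨w, hw, hwF, -⟩ := h1 (v :: t) ⟨hl.1, hchain⟩
        exact ⟨w, hw, hwF⟩
    · push_neg at hR
      have hall : ∀ z ∈ l, z ∈ (reachSet A x ∪ {x})ᶜ := by
        intro z hz
        simp only [Set.mem_compl_iff, Set.mem_union, Set.mem_singleton_iff, not_or]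
        exact ⟨hR z hz, fun hzx => hxl (hzx ▸ hz)⟩
      cases l with
      | nil => exact absurd hl id
      | cons v t =>
        have hchain : List.Chain (restrictRel A (reachSet A x ∪ {x})ᶜ) v (t ++ [v]) :=
          chain_restrict (t ++ [v]) v hl.2 (hall v (List.mem_cons_self)) (by
            intro z hz
            rcases List.mem_append.mp hz with hz | hz
            · exact hall z (List.mem_cons_of_mem v hz)
            · simp only [List.mem_singleton] at hz
              rw [hz]; exact hall v (List.mem_cons_self))
        obtain ⟨w, hw, hwF, -⟩ := h2 (v :: t) ⟨hl.1, hchain⟩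
        exact ⟨w, hw, hwF⟩
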